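/- arXiv:1303.1043 — 3 statements merged into one kernel-verified Lean document; each statement's English description precedes it below -/
import Mathlib

section
/- The formal power series B0(T) = Σ_{m≥0} (6m)!/((2m)!(3m)!) (−T)^m and B1(T) = Σ_{m≥0} ((1+6m)/(1−6m)) (6m)!/((2m)!(3m)!) (−T)^m satisfy the identity B0(T)·B1(−T) + B0(−T)·B1(T) = 2 in ℚ[[T]]. -/
open PowerSeries

/-- The coefficient of `T^m` in the Faber–Zagier series `B0`. -/
noncomputable def b0coeff (m : ℕ) : ℚ :=
  (-1) ^ m * (Nat.factorial (6 * m) : ℚ) /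
    ((Nat.factorial (2 * m) : ℚ) * (Nat.factorial (3 * m) : ℚ))

/-- The coefficient of `T^m` in the Faber–Zagier series `B1`. -/
noncomputable def b1coeff (m : ℕ) : ℚ :=
  (-1) ^ m * ((1 + 6 * (m : ℚ)) / (1 - 6 * (m : ℚ))) * (Nat.factorial (6 * m) : ℚ) /
    ((Nat.factorial (2 * m) : ℚ) * (Nat.factorial (3 * m) : ℚ))

noncomputable def B0 : PowerSeries ℚ := PowerSeries.mk b0coeff

noncomputable def B1 : PowerSeries ℚ := PowerSeries.mk b1coeff

/-- `B0(-T)`. -/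
noncomputable def B0neg : PowerSeries ℚ := PowerSeries.mk fun m => (-1) ^ m * b0coeff m

/-- `B1(-T)`. -/
noncomputable def B1neg : PowerSeries ℚ := PowerSeries.mk fun m => (-1) ^ m * b1coeff m


noncomputable def fzA (m : ℕ) : ℚ :=
  (Nat.factorial (6 * m) : ℚ) / ((Nat.factorial (2 * m) : ℚ) * (Nat.factorial (3 * m) : ℚ))

lemma fact_cast_ne (k : ℕ) : ((Nat.factorial k : ℚ)) ≠ 0 := by
  exact_mod_cast Nat.factorial_ne_zero k

lemma fzA_zero : fzA 0 = 1 := by norm_num [fzA, Nat.factorial]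

lemma fzA_one : fzA 1 = 60 := by norm_num [fzA, Nat.factorial]

lemma fzA_succ (m : ℕ) : fzA (m+1) =
    12*(6*(m:ℚ)+1)*(6*(m:ℚ)+5)/((m:ℚ)+1) * fzA m := by
  have e6 : ((Nat.factorial (6*(m+1)) : ℚ)) =
      (6*(m:ℚ)+6)*((6*m+5)*((6*m+4)*((6*m+3)*((6*m+2)*((6*m+1)*(Nat.factorial (6*m) : ℚ)))))) := by
    have h : 6*(m+1) = 6*m+5+1 := by ring
    rw [h]
    push_cast [Nat.factorial_succ]
    ring
  have e2 : ((Nat.factorial (2*(m+1)) : ℚ)) =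
      (2*(m:ℚ)+2)*((2*m+1)*(Nat.factorial (2*m) : ℚ)) := by
    have h : 2*(m+1) = 2*m+1+1 := by ring
    rw [h]
    push_cast [Nat.factorial_succ]
    ring
  have e3 : ((Nat.factorial (3*(m+1)) : ℚ)) =
      (3*(m:ℚ)+3)*((3*m+2)*((3*m+1)*(Nat.factorial (3*m) : ℚ))) := by
    have h : 3*(m+1) = 3*m+2+1 := by ring
    rw [h]
    push_cast [Nat.factorial_succ]
    ring
  rw [fzA, fzA, e6, e2, e3]
  have h1 : ((m:ℚ)+1) ≠ 0 := by positivity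
  have h2 : (2*(m:ℚ)+2) ≠ 0 := by positivity
  have h3 : (2*(m:ℚ)+1) ≠ 0 := by positivity
  have h4 : (3*(m:ℚ)+3) ≠ 0 := by positivity
  have h5 : (3*(m:ℚ)+2) ≠ 0 := by positivity
  have h6 : (3*(m:ℚ)+1) ≠ 0 := by positivity
  field_simp [fact_cast_ne]
  ring

noncomputable def fzc (j : ℕ) : ℚ := (1 + 6*(j:ℚ)) / (1 - 6*(j:ℚ))

noncomputable def fzT (i j : ℕ) : ℚ := (-1)^i * fzA i * fzA j * fzc j

noncomputable def fzS (n : ℕ) : ℚ := ∑ i ∈ Finset.range (n+1), fzT i (n-i)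

noncomputable def fzg (n i : ℕ) : ℚ :=
  ((i:ℚ) * (-36*((n:ℚ)+1)*(i:ℚ)^2 + 12*(3*(n:ℚ)+4)^2*(i:ℚ)
      - (72*(n:ℚ)^3+324*(n:ℚ)^2+487*(n:ℚ)+247)) /
    (((n:ℚ)+2)*(6*(n:ℚ)-6*(i:ℚ)+5)*(6*(n:ℚ)-6*(i:ℚ)+11)))
  * (-1)^i * fzA i * fzA (n+2-i)

lemma six_sub_ne (a b : ℕ) (r : ℤ) (hr : ¬ (6:ℤ) ∣ r) : (6*(a:ℚ) - 6*(b:ℚ) + (r:ℚ)) ≠ 0 := by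
  intro h
  have h2 : ((6*a + r : ℤ) : ℚ) = ((6*b : ℤ) : ℚ) := by push_cast; linarith
  have h3 : (6*(a:ℤ) + r) = 6*b := by exact_mod_cast h2
  exact hr ⟨(b:ℤ) - a, by linarith⟩

lemma one_sub_six_ne (j : ℕ) : (1 - 6*(j:ℚ)) ≠ 0 := by
  intro h
  have h2 : ((1 : ℤ) : ℚ) = ((6*j : ℤ) : ℚ) := by push_cast; linarith
  have h3 : (1:ℤ) = 6*j := by exact_mod_cast h2
  omega

lemma fz_step (i j : ℕ) :
    ((i:ℚ)+(j:ℚ)+1) * fzT i (j+2)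
      - 20736*((i:ℚ)+(j:ℚ))*(3*((i:ℚ)+(j:ℚ))+2)*(3*((i:ℚ)+(j:ℚ))+4) * fzT i j
    = fzg (i+j) (i+1) - fzg (i+j) i := by
  have s1 : i+j+2-i = j+2 := by omega
  have s2 : i+j+2-(i+1) = j+1 := by omega
  rw [fzg, fzg, s1, s2, fzT, fzT, fzc, fzc]
  have hAj2 : fzA (j+2) = 12*(6*(j:ℚ)+7)*(6*(j:ℚ)+11)/((j:ℚ)+2) * fzA (j+1) := by
    have h := fzA_succ (j+1)
    rw [show j+2 = j+1+1 from rfl, h]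
    push_cast; ring
  have hAj1 : fzA (j+1) = 12*(6*(j:ℚ)+1)*(6*(j:ℚ)+5)/((j:ℚ)+1) * fzA j := fzA_succ j
  have hAi : fzA (i+1) = 12*(6*(i:ℚ)+1)*(6*(i:ℚ)+5)/((i:ℚ)+1) * fzA i := fzA_succ i
  rw [hAj2, hAj1, hAi]
  have hj1 : ((j:ℚ)+1) ≠ 0 := by positivity
  have hj2 : ((j:ℚ)+2) ≠ 0 := by positivity
  have hi1 : ((i:ℚ)+1) ≠ 0 := by positivity
  have hn2 : ((i:ℚ)+(j:ℚ)+2) ≠ 0 := by positivity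
  have hc0 : (1 - 6*(j:ℚ)) ≠ 0 := one_sub_six_ne j
  have hc2 : (1 - 6*((j:ℚ)+2)) ≠ 0 := by
    have h := one_sub_six_ne (j+2); push_cast at h; convert h using 2
  have hg5 : (6*((i:ℚ)+(j:ℚ)) - 6*(i:ℚ) + 5) ≠ 0 := by
    have h := six_sub_ne (i+j) i 5 (by decide); push_cast at h; convert h using 2 <;> push_cast <;> ring
  have hg11 : (6*((i:ℚ)+(j:ℚ)) - 6*(i:ℚ) + 11) ≠ 0 := by
    have h := six_sub_ne (i+j) i 11 (by decide); push_cast at h; convert h using 2 <;> push_cast <;> ring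
  have hg5' : (6*((i:ℚ)+(j:ℚ)) - 6*((i:ℚ)+1) + 5) ≠ 0 := by
    have h := six_sub_ne (i+j) (i+1) 5 (by decide); push_cast at h; convert h using 2 <;> push_cast <;> ring
  have hg11' : (6*((i:ℚ)+(j:ℚ)) - 6*((i:ℚ)+1) + 11) ≠ 0 := by
    have h := six_sub_ne (i+j) (i+1) 11 (by decide); push_cast at h; convert h using 2 <;> push_cast <;> ring
  have hj5 : (6*(j:ℚ)+5) ≠ 0 := by positivity
  have hj11 : (6*(j:ℚ)+11) ≠ 0 := by positivity
  have hj1' : (6*(j:ℚ)-1) ≠ 0 := by intro h; exact hc0 (by linarith)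
  have hj13 : (6*(j:ℚ)+11) ≠ 0 := by positivity
  have hc0' : (1 - (j:ℚ)*6) ≠ 0 := by intro h; exact hc0 (by linarith)
  have hq1 : (6*((i:ℚ)+(j:ℚ)-((i:ℚ)+1))+5) ≠ 0 := by intro h; exact hg5' (by linarith)
  have hq2 : (6*((i:ℚ)+(j:ℚ)-((i:ℚ)+1))+11) ≠ 0 := by intro h; exact hg11' (by linarith)
  have hq3 : (6*((i:ℚ)+(j:ℚ)-(i:ℚ))+5) ≠ 0 := by intro h; exact hg5 (by linarith)
  have hq4 : (6*((i:ℚ)+(j:ℚ)-(i:ℚ))+11) ≠ 0 := by intro h; exact hg11 (by linarith)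
  push_cast
  field_simp
  ring

lemma fz_boundary1 (n : ℕ) :
    ((n:ℚ)+1) * fzT (n+1) 1 = fzg n (n+2) - fzg n (n+1) := by
  have s1 : n+2-(n+2) = 0 := by omega
  have s2 : n+2-(n+1) = 1 := by omega
  rw [fzg, fzg, s1, s2, fzT, fzc, fzA_zero, fzA_one]
  have hA : fzA (n+2) = 12*(6*(n:ℚ)+7)*(6*(n:ℚ)+11)/((n:ℚ)+2) * fzA (n+1) := by
    have h := fzA_succ (n+1)
    rw [show n+2 = n+1+1 from rfl, h]
    push_cast; ring
  rw [hA]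
  have hn2 : ((n:ℚ)+2) ≠ 0 := by positivity
  have h1 : (6*(n:ℚ) - 6*((n:ℚ)+2) + 5) ≠ 0 := by intro h; linarith
  have h2 : (6*(n:ℚ) - 6*((n:ℚ)+2) + 11) ≠ 0 := by intro h; linarith
  have h3 : (6*(n:ℚ) - 6*((n:ℚ)+1) + 5) ≠ 0 := by intro h; linarith
  have h4 : (6*(n:ℚ) - 6*((n:ℚ)+1) + 11) ≠ 0 := by intro h; linarith
  have hp1 : ((-1:ℚ))^(n+1) = -(-1)^n := by rw [pow_succ]; ring
  have hp2 : ((-1:ℚ))^(n+2) = (-1)^n := by rw [pow_succ, pow_succ]; ring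
  push_cast [hp1, hp2]
  norm_num
  field_simp
  ring

lemma fz_boundary2 (n : ℕ) :
    ((n:ℚ)+1) * fzT (n+2) 0 = - fzg n (n+2) := by
  have s1 : n+2-(n+2) = 0 := by omega
  rw [fzg, s1, fzT, fzc, fzA_zero]
  have hA : fzA (n+2) = 12*(6*(n:ℚ)+7)*(6*(n:ℚ)+11)/((n:ℚ)+2) * fzA (n+1) := by
    have h := fzA_succ (n+1)
    rw [show n+2 = n+1+1 from rfl, h]
    push_cast; ring
  rw [hA]
  have hn2 : ((n:ℚ)+2) ≠ 0 := by positivity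
  have h1 : (6*(n:ℚ) - 6*((n:ℚ)+2) + 5) ≠ 0 := by intro h; linarith
  have h2 : (6*(n:ℚ) - 6*((n:ℚ)+2) + 11) ≠ 0 := by intro h; linarith
  push_cast
  norm_num
  field_simp
  ring

lemma fzg_zero (n : ℕ) : fzg n 0 = 0 := by simp [fzg]

lemma fz_key (n : ℕ) : ((n:ℚ)+1) * fzS (n+2)
    = 20736*(n:ℚ)*(3*(n:ℚ)+2)*(3*(n:ℚ)+4) * fzS n := by
  set ρ : ℚ := 20736*(n:ℚ)*(3*(n:ℚ)+2)*(3*(n:ℚ)+4) with hρ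
  have e1 : (∑ i ∈ Finset.range (n+3), (if i ≤ n then ρ * fzT i (n-i) else 0))
      = ρ * fzS n := by
    rw [fzS, Finset.mul_sum]
    rw [← Finset.sum_subset (Finset.range_subset_range.mpr (show n+1 ≤ n+3 by omega))
        (fun x hx hx2 => by
          rw [if_neg]
          simp only [Finset.mem_range] at hx hx2
          omega)]
    refine Finset.sum_congr rfl (fun x hx => ?_)
    rw [if_pos]
    simp only [Finset.mem_range] at hx
    omega
  have e2 : ((n:ℚ)+1) * fzS (n+2) = ∑ i ∈ Finset.range (n+3), ((n:ℚ)+1) * fzT i (n+2-i) := by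
    rw [fzS, Finset.mul_sum]
  have e3 : ∑ i ∈ Finset.range (n+3),
      (((n:ℚ)+1) * fzT i (n+2-i) - (if i ≤ n then ρ * fzT i (n-i) else 0)) = 0 := by
    rw [Finset.sum_range_succ]
    have hmain : ∀ i ∈ Finset.range (n+2),
        (((n:ℚ)+1) * fzT i (n+2-i) - (if i ≤ n then ρ * fzT i (n-i) else 0))
        = fzg n (i+1) - fzg n i := by
      intro i hi
      simp only [Finset.mem_range] at hi
      rcases le_or_gt i n with hin | hin
      · obtain ⟨j, rfl⟩ := Nat.exists_eq_add_of_le hin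
        rw [if_pos (by omega)]
        have h := fz_step i j
        have hs : i + j + 2 - i = j + 2 := by omega
        have hs2 : i + j - i = j := by omega
        rw [hs2, hs, hρ]
        rw [← h]
        push_cast
        ring
      · have hi' : i = n+1 := by omega
        subst hi'
        rw [if_neg (by omega)]
        have h := fz_boundary1 n
        have hs : n + 2 - (n+1) = 1 := by omega
        rw [hs]
        linarith
    rw [Finset.sum_congr rfl hmain, Finset.sum_range_sub (fzg n), fzg_zero]
    have h2 := fz_boundary2 n
    have hs : n + 2 - (n+2) = 0 := by omega
    rw [if_neg (by omega), hs]
    linarith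
  rw [Finset.sum_sub_distrib] at e3
  rw [e2, ← e1]
  linarith

lemma fzS_zero : fzS 0 = 1 := by
  norm_num [fzS, fzT, fzc, fzA_zero]

lemma fzS_even_pos (k : ℕ) : fzS (2*k+2) = 0 := by
  induction k with
  | zero =>
      have h := fz_key 0
      norm_num at h
      simpa using h
  | succ k ih =>
      have h := fz_key (2*k+2)
      rw [ih, mul_zero] at h
      have hne : ((2*k+2 : ℕ) : ℚ) + 1 ≠ 0 := by positivity
      have := mul_eq_zero.mp h
      rcases this with h' | h'
      · exact absurd h' hne
      · have hs : 2*(k+1)+2 = 2*k+2+2 := by ring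
        rw [hs]
        exact h'


lemma b0coeff_eq (m : ℕ) : b0coeff m = (-1)^m * fzA m := by
  rw [b0coeff, fzA]; ring

lemma b1coeff_eq (m : ℕ) : b1coeff m = (-1)^m * fzc m * fzA m := by
  rw [b1coeff, fzc, fzA]; ring

lemma coeff_sum (n : ℕ) :
    ∑ p ∈ Finset.HasAntidiagonal.antidiagonal n,
      (b0coeff p.1 * ((-1)^p.2 * b1coeff p.2) + (-1)^p.1 * b0coeff p.1 * b1coeff p.2)
    = if n = 0 then 2 else 0 := by
  rcases Nat.even_or_odd n with hev | hodd
  · have hterm : ∀ p ∈ Finset.HasAntidiagonal.antidiagonal n,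
        (b0coeff p.1 * ((-1:ℚ)^p.2 * b1coeff p.2) + (-1)^p.1 * b0coeff p.1 * b1coeff p.2)
        = 2 * fzT p.1 p.2 := by
      intro p hp
      rw [Finset.HasAntidiagonal.mem_antidiagonal] at hp
      have hpar : (Even p.1 ↔ Even p.2) := by
        rw [← Nat.even_add, hp]; exact hev
      rcases Nat.even_or_odd p.1 with h1 | h1
      · have h2 : Even p.2 := hpar.mp h1
        rw [b0coeff_eq, b1coeff_eq, fzT, h1.neg_one_pow, h2.neg_one_pow]
        ring
      · have h2 : Odd p.2 := Nat.odd_iff.mpr (by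
          rcases Nat.even_or_odd p.2 with h | h
          · exact absurd (hpar.mpr h) (Nat.not_even_iff_odd.mpr h1)
          · exact Nat.odd_iff.mp h)
        rw [b0coeff_eq, b1coeff_eq, fzT, h1.neg_one_pow, h2.neg_one_pow]
        ring
    rw [Finset.sum_congr rfl hterm, ← Finset.mul_sum]
    rw [Finset.Nat.sum_antidiagonal_eq_sum_range_succ_mk]
    have hS : ∑ k ∈ Finset.range (n+1), fzT (k, n-k).1 (k, n-k).2 = fzS n := by
      rw [fzS]
    rw [hS]
    rcases n with _ | m
    · rw [if_pos rfl, fzS_zero]; norm_num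
    · rw [if_neg (by omega)]
      obtain ⟨k, hk⟩ := hev
      have hm : m + 1 = 2*(k-1)+2 := by omega
      rw [hm, fzS_even_pos, mul_zero]
  · rw [if_neg (by rintro rfl; simp [Nat.odd_iff] at hodd)]
    apply Finset.sum_eq_zero
    intro p hp
    rw [Finset.HasAntidiagonal.mem_antidiagonal] at hp
    have hpar : ¬ (Even p.1 ↔ Even p.2) := by
      rw [← Nat.even_add, hp]
      simp [Nat.not_even_iff_odd.mpr hodd]
    have key : (-1:ℚ)^p.1 + (-1)^p.2 = 0 := by
      rcases Nat.even_or_odd p.1 with h1 | h1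
      · have h2 : Odd p.2 := by
          rcases Nat.even_or_odd p.2 with h | h
          · exact absurd (iff_of_true h1 h) hpar
          · exact h
        rw [h1.neg_one_pow, h2.neg_one_pow]; ring
      · have h2 : Even p.2 := by
          rcases Nat.even_or_odd p.2 with h | h
          · exact h
          · exact absurd (iff_of_false (Nat.not_even_iff_odd.mpr h1) (Nat.not_even_iff_odd.mpr h)) hpar
        rw [h1.neg_one_pow, h2.neg_one_pow]; ring
    have : (b0coeff p.1 * ((-1:ℚ)^p.2 * b1coeff p.2) + (-1)^p.1 * b0coeff p.1 * b1coeff p.2)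
        = ((-1:ℚ)^p.1 + (-1)^p.2) * (b0coeff p.1 * b1coeff p.2) := by ring
    rw [this, key, zero_mul]

theorem B0_mul_B1neg_add_B0neg_mul_B1 : B0 * B1neg + B0neg * B1 = 2 := by
  apply PowerSeries.ext
  intro n
  rw [map_add, PowerSeries.coeff_mul, PowerSeries.coeff_mul]
  simp only [B0, B1, B0neg, B1neg, PowerSeries.coeff_mk]
  rw [← Finset.sum_add_distrib]
  rw [coeff_sum n]
  have h2 : (2 : PowerSeries ℚ) = PowerSeries.C 2 := by
    simp [Nat.cast_ofNat, map_ofNat]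
  rw [h2, PowerSeries.coeff_C]
end

section
/- Let B0^even, B0^odd, B1^even, B1^odd denote the even-degree and odd-degree parts of the series B0(T) = Σ_{m≥0} (6m)!/((2m)!(3m)!) (−T)^m and B1(T) = Σ_{m≥0} ((1+6m)/(1−6m)) (6m)!/((2m)!(3m)!) (−T)^m. Then B0^even(T)·B1^even(T) − B0^odd(T)·B1^odd(T) = 1 in ℚ[[T]]. -/
open PowerSeries

/-- Even part of `B0`. -/
noncomputable def B0even : PowerSeries ℚ :=
  PowerSeries.mk fun m => if Even m then b0coeff m else 0

/-- Odd part of `B0`. -/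
noncomputable def B0odd : PowerSeries ℚ :=
  PowerSeries.mk fun m => if ¬ Even m then b0coeff m else 0

/-- Even part of `B1`. -/
noncomputable def B1even : PowerSeries ℚ :=
  PowerSeries.mk fun m => if Even m then b1coeff m else 0

/-- Odd part of `B1`. -/
noncomputable def B1odd : PowerSeries ℚ :=
  PowerSeries.mk fun m => if ¬ Even m then b1coeff m else 0

/-! ### Auxiliary development -/

noncomputable def cc (m : ℕ) : ℚ :=
  (Nat.factorial (6 * m) : ℚ) / ((Nat.factorial (2 * m) : ℚ) * (Nat.factorial (3 * m) : ℚ))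

noncomputable def dd (m : ℕ) : ℚ := (1 + 6 * (m : ℚ)) / (1 - 6 * (m : ℚ)) * cc m

lemma fact_ne (k : ℕ) : (Nat.factorial k : ℚ) ≠ 0 :=
  Nat.cast_ne_zero.mpr (Nat.factorial_ne_zero k)

lemma hrec (m : ℕ) : ((m : ℚ) + 1) * cc (m + 1) = 12 * (6*(m:ℚ)+1) * (6*(m:ℚ)+5) * cc m := by
  unfold cc
  rw [show 6*(m+1) = 6*m+5+1 by ring, show 2*(m+1) = 2*m+1+1 by ring,
      show 3*(m+1) = 3*m+2+1 by ring]
  rw [Nat.factorial_succ (6*m+5), show 6*m+5 = 6*m+4+1 by ring,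
      Nat.factorial_succ (6*m+4), show 6*m+4 = 6*m+3+1 by ring,
      Nat.factorial_succ (6*m+3), show 6*m+3 = 6*m+2+1 by ring,
      Nat.factorial_succ (6*m+2), show 6*m+2 = 6*m+1+1 by ring,
      Nat.factorial_succ (6*m+1), show 6*m+1 = 6*m+0+1 by ring,
      Nat.factorial_succ (6*m+0),
      Nat.factorial_succ (2*m+1), show 2*m+1 = 2*m+0+1 by ring,
      Nat.factorial_succ (2*m+0),
      Nat.factorial_succ (3*m+2), show 3*m+2 = 3*m+1+1 by ring,
      Nat.factorial_succ (3*m+1), show 3*m+1 = 3*m+0+1 by ring,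
      Nat.factorial_succ (3*m+0)]
  have h1 := fact_ne (6*m)
  have h2 := fact_ne (2*m)
  have h3 := fact_ne (3*m)
  push_cast
  field_simp
  ring

lemma hdd (m : ℕ) : dd (m + 1) = cc (m + 1) - (144 + 864 * (m : ℚ)) * cc m := by
  unfold dd
  have hm : (0:ℚ) ≤ (m:ℚ) := Nat.cast_nonneg m
  have hne : (1 : ℚ) - 6 * ((m:ℚ)+1) ≠ 0 := by intro h; nlinarith
  push_cast
  field_simp
  linear_combination (12 : ℚ) * hrec m

noncomputable def Cs : ℚ⟦X⟧ := PowerSeries.mk cc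
noncomputable def Cn : ℚ⟦X⟧ := PowerSeries.mk fun m => (-1)^m * cc m
noncomputable def Ds : ℚ⟦X⟧ := PowerSeries.mk dd
noncomputable def Dn : ℚ⟦X⟧ := PowerSeries.mk fun m => (-1)^m * dd m

lemma odeC : d⁄dX ℚ Cs = C (R := ℚ) 432 * (X^2 * d⁄dX ℚ (d⁄dX ℚ Cs))
    + C (R := ℚ) 864 * (X^1 * d⁄dX ℚ Cs) + C (R := ℚ) 60 * Cs := by
  ext n
  simp only [map_add, coeff_C_mul, coeff_X_pow_mul', coeff_derivative, Cs, coeff_mk]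
  rcases n with _ | n
  · norm_num
    linear_combination hrec 0
  · rcases n with _ | n
    · norm_num
      linear_combination hrec 1
    · rw [if_pos (by omega), if_pos (by omega), show n+2-2 = n by omega,
        show n+2-1 = n+1 by omega]
      linear_combination (norm := (push_cast; ring1)) hrec (n+2)

lemma odeCn : d⁄dX ℚ Cn = -(C (R := ℚ) 432 * (X^2 * d⁄dX ℚ (d⁄dX ℚ Cn)))
    - C (R := ℚ) 864 * (X^1 * d⁄dX ℚ Cn) - C (R := ℚ) 60 * Cn := by
  ext n
  simp only [map_sub, map_neg, coeff_C_mul, coeff_X_pow_mul', coeff_derivative, Cn, coeff_mk]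
  rcases n with _ | n
  · norm_num
    linear_combination hrec 0
  · rcases n with _ | n
    · norm_num
      linear_combination hrec 1
    · rw [if_pos (by omega), if_pos (by omega), show n+2-2 = n by omega,
        show n+2-1 = n+1 by omega]
      linear_combination (norm := (push_cast [pow_succ]; ring1)) ((-1:ℚ)^n * (-1)) * hrec (n+2)

lemma hDs : Ds = Cs - C (R := ℚ) 144 * (X^1 * Cs) - C (R := ℚ) 864 * (X^2 * d⁄dX ℚ Cs) := by
  ext n
  simp only [map_sub, coeff_C_mul, coeff_X_pow_mul', coeff_derivative, Cs, Ds, coeff_mk]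
  rcases n with _ | n
  · norm_num
    unfold dd
    norm_num
  · rcases n with _ | n
    · norm_num
      linear_combination (norm := (push_cast; ring1)) hdd 0
    · rw [if_pos (by omega), if_pos (by omega), show n+2-2 = n by omega,
        show n+2-1 = n+1 by omega]
      linear_combination (norm := (push_cast; ring1)) hdd (n+1)

lemma hDn : Dn = Cn + C (R := ℚ) 144 * (X^1 * Cn) + C (R := ℚ) 864 * (X^2 * d⁄dX ℚ Cn) := by
  ext n
  simp only [map_add, coeff_C_mul, coeff_X_pow_mul', coeff_derivative, Cn, Dn, coeff_mk]
  rcases n with _ | n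
  · norm_num
    unfold dd
    norm_num
  · rcases n with _ | n
    · norm_num
      linear_combination (norm := (push_cast; ring1)) (-1 : ℚ) * hdd 0
    · rw [if_pos (by omega), if_pos (by omega), show n+2-2 = n by omega,
        show n+2-1 = n+1 by omega]
      linear_combination (norm := (push_cast [pow_succ]; ring1)) ((-1:ℚ)^n) * hdd (n+1)

noncomputable def K : ℚ⟦X⟧ :=
  Cs * Cn - C (R := ℚ) 432 * (X^2 * (Cn * d⁄dX ℚ Cs - Cs * d⁄dX ℚ Cn))

lemma h2X : d⁄dX ℚ (X^2 : ℚ⟦X⟧) = 2*X := by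
  rw [pow_two, Derivation.leibniz]
  simp [smul_eq_mul]
  ring

lemma hdK : d⁄dX ℚ K = 0 := by
  unfold K
  simp only [map_sub, Derivation.leibniz, derivative_C, h2X, smul_eq_mul]
  have hc : (C (R := ℚ) 864 : ℚ⟦X⟧) = 2 * C (R := ℚ) 432 := by
    rw [show (864:ℚ) = 2*432 by norm_num, map_mul, map_ofNat]
  linear_combination Cn * odeC + Cs * odeCn
    + (X * (Cn * d⁄dX ℚ Cs - Cs * d⁄dX ℚ Cn)) * hc

lemma hK : K = 1 := by
  refine PowerSeries.derivative.ext ?_ ?_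
  · rw [hdK, Derivation.map_one_eq_zero]
  · simp [K, Cs, Cn, map_sub, map_mul, constantCoeff_X]
    norm_num [cc]

lemma hb0 (m : ℕ) : b0coeff m = (-1)^m * cc m := by rw [b0coeff, cc]; ring

lemma hb1 (m : ℕ) : b1coeff m = (-1)^m * dd m := by rw [b1coeff, dd, cc]; ring

lemma h2target : C (R := ℚ) 2 * (B0even * B1even - B0odd * B1odd) = Cs * Dn + Cn * Ds := by
  ext n
  rw [coeff_C_mul, map_sub, map_add, coeff_mul, coeff_mul, coeff_mul, coeff_mul,
      ← Finset.sum_sub_distrib, ← Finset.sum_add_distrib, Finset.mul_sum]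
  refine Finset.sum_congr rfl ?_
  rintro ⟨i, j⟩ -
  simp only [B0even, B0odd, B1even, B1odd, Cs, Cn, Ds, Dn, coeff_mk, hb0, hb1]
  rcases Nat.even_or_odd i with hi | hi <;> rcases Nat.even_or_odd j with hj | hj
  · rw [if_pos hi, if_pos hj, if_neg (not_not_intro hi), if_neg (not_not_intro hj),
      hi.neg_one_pow, hj.neg_one_pow]
    ring
  · rw [if_pos hi, if_neg (Nat.not_even_iff_odd.mpr hj), if_neg (not_not_intro hi),
      if_pos (Nat.not_even_iff_odd.mpr hj), hi.neg_one_pow, hj.neg_one_pow]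
    ring
  · rw [if_neg (Nat.not_even_iff_odd.mpr hi), if_pos hj, if_pos (Nat.not_even_iff_odd.mpr hi),
      if_neg (not_not_intro hj), hi.neg_one_pow, hj.neg_one_pow]
    ring
  · rw [if_neg (Nat.not_even_iff_odd.mpr hi), if_neg (Nat.not_even_iff_odd.mpr hj),
      if_pos (Nat.not_even_iff_odd.mpr hi), if_pos (Nat.not_even_iff_odd.mpr hj),
      hi.neg_one_pow, hj.neg_one_pow]
    ring

theorem B0even_mul_B1even_sub_B0odd_mul_B1odd :
    B0even * B1even - B0odd * B1odd = 1 := by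
  have htwo : (2 : ℚ⟦X⟧) ≠ 0 := by
    intro h
    have := congrArg (constantCoeff (R := ℚ)) h
    rw [map_ofNat, map_zero] at this
    norm_num at this
  apply mul_left_cancel₀ htwo
  have hc : (C (R := ℚ) 864 : ℚ⟦X⟧) = 2 * C (R := ℚ) 432 := by
    rw [show (864:ℚ) = 2*432 by norm_num, map_mul, map_ofNat]
  calc (2 : ℚ⟦X⟧) * (B0even * B1even - B0odd * B1odd)
      = C (R := ℚ) 2 * (B0even * B1even - B0odd * B1odd) := by rw [map_ofNat]
    _ = Cs * Dn + Cn * Ds := h2target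
    _ = K + K := by
        rw [hDs, hDn]
        unfold K
        linear_combination (X^2 * (Cs * d⁄dX ℚ Cn - Cn * d⁄dX ℚ Cs)) * hc
    _ = 2 * 1 := by rw [hK]; ring
end

section
/- In the two-variable formal power series ring ℚ[[Z,W]] with two commuting square-root-of-one parameters ζ', ζ'' (i.e., working in (ℚ[ζ',ζ'']/(ζ'²−1, ζ''²−1))[[Z,W]]), the series ζ' + ζ'' − B0(ζ'Z)·ζ''·B1(ζ''W) − ζ'·B1(ζ'Z)·B0(ζ''W) is divisible by Z + W. -/
open MvPowerSeries

section

variable (A : Type) [CommRing A] [Algebra ℚ A] (z₁ z₂ : A)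

/-- `B0(ζ'Z)` as a two-variable power series (`Z` is the variable `0`, `W` is `1`). -/
noncomputable def B0Z : MvPowerSeries (Fin 2) A :=
  fun e => if e 1 = 0 then z₁ ^ (e 0) • algebraMap ℚ A (b0coeff (e 0)) else 0

/-- `B1(ζ'Z)`. -/
noncomputable def B1Z : MvPowerSeries (Fin 2) A :=
  fun e => if e 1 = 0 then z₁ ^ (e 0) • algebraMap ℚ A (b1coeff (e 0)) else 0

/-- `B0(ζ''W)`. -/
noncomputable def B0W : MvPowerSeries (Fin 2) A :=
  fun e => if e 0 = 0 then z₂ ^ (e 1) • algebraMap ℚ A (b0coeff (e 1)) else 0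

/-- `B1(ζ''W)`. -/
noncomputable def B1W : MvPowerSeries (Fin 2) A :=
  fun e => if e 0 = 0 then z₂ ^ (e 1) • algebraMap ℚ A (b1coeff (e 1)) else 0

/-- The numerator `ζ' + ζ'' − B0(ζ'Z)·ζ''·B1(ζ''W) − ζ'·B1(ζ'Z)·B0(ζ''W)`. -/
noncomputable def edgeNumerator : MvPowerSeries (Fin 2) A :=
  (MvPowerSeries.C : A →+* MvPowerSeries (Fin 2) A) (z₁ + z₂)
    - B0Z A z₁ * (MvPowerSeries.C : A →+* MvPowerSeries (Fin 2) A) z₂ * B1W A z₂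
    - (MvPowerSeries.C : A →+* MvPowerSeries (Fin 2) A) z₁ * B1Z A z₁ * B0W A z₂

end

section FZpart1
open PowerSeries

lemma b0coeff_zero : b0coeff 0 = 1 := by simp [b0coeff]

lemma b1coeff_zero : b1coeff 0 = 1 := by norm_num [b1coeff]

lemma fact_cast_pos (k : ℕ) : (0:ℚ) < (Nat.factorial k : ℚ) := by
  exact_mod_cast Nat.factorial_pos k

lemma fact6 (m : ℕ) : (Nat.factorial (6*(m+1)) : ℚ)
    = (6*m+6)*(6*m+5)*(6*m+4)*(6*m+3)*(6*m+2)*(6*m+1) * Nat.factorial (6*m) := by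
  have h : 6*(m+1) = (6*m) + 1 + 1 + 1 + 1 + 1 + 1 := by ring
  rw [h]
  simp [Nat.factorial_succ]
  push_cast
  ring

lemma fact2 (m : ℕ) : (Nat.factorial (2*(m+1)) : ℚ)
    = (2*m+2)*(2*m+1) * Nat.factorial (2*m) := by
  have h : 2*(m+1) = (2*m) + 1 + 1 := by ring
  rw [h]
  simp [Nat.factorial_succ]
  push_cast
  ring

lemma fact3 (m : ℕ) : (Nat.factorial (3*(m+1)) : ℚ)
    = (3*m+3)*(3*m+2)*(3*m+1) * Nat.factorial (3*m) := by
  have h : 3*(m+1) = (3*m) + 1 + 1 + 1 := by ring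
  rw [h]
  simp [Nat.factorial_succ]
  push_cast
  ring

lemma b0_rec (m : ℕ) : ((m:ℚ)+1) * b0coeff (m+1) = -(12*(6*(m:ℚ)+1)*(6*(m:ℚ)+5)) * b0coeff m := by
  unfold b0coeff
  rw [fact6, fact2, fact3]
  have h2 := (fact_cast_pos (2*m)).ne'
  have h3 := (fact_cast_pos (3*m)).ne'
  field_simp
  ring

lemma b1_rel (m : ℕ) : b1coeff (m+1) = b0coeff (m+1) + (144 + 864*(m:ℚ)) * b0coeff m := by
  unfold b0coeff b1coeff
  rw [fact6, fact2, fact3]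
  have h2 := (fact_cast_pos (2*m)).ne'
  have h3 := (fact_cast_pos (3*m)).ne'
  have h5 : (1 - 6*((m:ℚ)+1)) ≠ 0 := by
    intro h; have : (6:ℚ)*m = -5 := by linarith
    have : (0:ℚ) ≤ (m:ℚ) := Nat.cast_nonneg m
    nlinarith
  push_cast
  field_simp
  ring

noncomputable def phi : ℚ⟦X⟧ := PowerSeries.mk b0coeff
noncomputable def psi : ℚ⟦X⟧ := PowerSeries.rescale (-1) phi
noncomputable def vv : ℚ⟦X⟧ := PowerSeries.mk b1coeff

lemma coeff_psi (n : ℕ) : PowerSeries.coeff n psi = (-1)^n * b0coeff n := by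
  simp [psi, phi, PowerSeries.coeff_rescale]

lemma deriv_rescale (a : ℚ) (f : ℚ⟦X⟧) :
    d⁄dX ℚ (PowerSeries.rescale a f) = PowerSeries.C a * PowerSeries.rescale a (d⁄dX ℚ f) := by
  ext n
  simp [coeff_derivative, PowerSeries.coeff_rescale, pow_succ]
  ring

lemma coeff_X2_mul (f : ℚ⟦X⟧) (n : ℕ) :
    PowerSeries.coeff (n+2) (PowerSeries.X^2 * f) = PowerSeries.coeff n f := by
  simpa using PowerSeries.coeff_X_pow_mul f 2 n

lemma coeff_X1_mul (f : ℚ⟦X⟧) (n : ℕ) :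
    PowerSeries.coeff (n+1) (PowerSeries.X * f) = PowerSeries.coeff n f := by
  simpa [pow_one] using PowerSeries.coeff_X_pow_mul f 1 n

lemma phi_ODE : PowerSeries.C 432 * (PowerSeries.X^2 * (d⁄dX ℚ (d⁄dX ℚ phi))) + PowerSeries.C 864 * (PowerSeries.X * (d⁄dX ℚ phi))
    + d⁄dX ℚ phi + PowerSeries.C 60 * phi = 0 := by
  ext n
  simp only [map_add, map_zero, PowerSeries.coeff_C_mul]
  rcases n with _ | n
  · have h := b0_rec 0
    simp [coeff_derivative, phi]
    norm_num at h ⊢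
    linarith
  · rcases n with _ | n
    · have h := b0_rec 1
      rw [show ((0:ℕ)+1 = 1) from rfl]
      have e2 : (PowerSeries.coeff 1) (PowerSeries.X ^ 2 * (d⁄dX ℚ (d⁄dX ℚ phi))) = 0 := by
        rw [PowerSeries.coeff_X_pow_mul']
        norm_num
      rw [e2, coeff_X1_mul]
      simp [coeff_derivative, phi]
      norm_num at h ⊢
      linarith
    · have h := b0_rec (n+2)
      rw [show (n+1+1 = n+2) from rfl, coeff_X2_mul, coeff_X1_mul]
      simp [coeff_derivative, phi]
      push_cast at h ⊢
      nlinarith [h]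

lemma rescale_C' (a r : ℚ) : PowerSeries.rescale a (PowerSeries.C r) = PowerSeries.C r := by
  ext n
  simp only [PowerSeries.coeff_rescale, PowerSeries.coeff_C]
  split_ifs with h <;> simp [h]

lemma psi_ODE : PowerSeries.C 432 * (PowerSeries.X^2 * (d⁄dX ℚ (d⁄dX ℚ psi))) + PowerSeries.C 864 * (PowerSeries.X * (d⁄dX ℚ psi))
    - d⁄dX ℚ psi + PowerSeries.C 60 * psi = 0 := by
  have h := congrArg (PowerSeries.rescale (-1 : ℚ)) phi_ODE
  have hd : PowerSeries.rescale (-1:ℚ) (d⁄dX ℚ phi) = - d⁄dX ℚ psi := by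
    rw [psi, deriv_rescale]; ext n; simp
  have hd2 : PowerSeries.rescale (-1:ℚ) (d⁄dX ℚ (d⁄dX ℚ phi)) = d⁄dX ℚ (d⁄dX ℚ psi) := by
    have h2 : d⁄dX ℚ (d⁄dX ℚ psi) = d⁄dX ℚ (PowerSeries.C (-1) * PowerSeries.rescale (-1) (d⁄dX ℚ phi)) := by
      rw [psi, deriv_rescale]
    rw [h2, Derivation.leibniz]
    simp [deriv_rescale]
  simp only [map_add, map_mul, map_zero, rescale_C', PowerSeries.rescale_neg_one_X,
    hd, hd2, map_pow] at h
  rw [← h, ← psi]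
  ring

lemma wronskian_eq : phi * psi - 1
    + PowerSeries.C 432 * (PowerSeries.X^2 * (d⁄dX ℚ phi * psi - phi * d⁄dX ℚ psi)) = 0 := by
  set N := phi * psi - 1 + PowerSeries.C 432 * (PowerSeries.X^2 * (d⁄dX ℚ phi * psi - phi * d⁄dX ℚ psi)) with hN
  have hdN : d⁄dX ℚ N = 0 := by
    have expand : d⁄dX ℚ N =
        psi * (PowerSeries.C 432 * (PowerSeries.X^2 * (d⁄dX ℚ (d⁄dX ℚ phi))) + PowerSeries.C 864 * (PowerSeries.X * (d⁄dX ℚ phi))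
          + d⁄dX ℚ phi + PowerSeries.C 60 * phi)
        - phi * (PowerSeries.C 432 * (PowerSeries.X^2 * (d⁄dX ℚ (d⁄dX ℚ psi))) + PowerSeries.C 864 * (PowerSeries.X * (d⁄dX ℚ psi))
          - d⁄dX ℚ psi + PowerSeries.C 60 * psi) := by
      rw [hN]
      simp only [map_add, map_sub, map_one, map_mul, Derivation.leibniz, derivative_X,
        Derivation.leibniz_pow, derivative_C, smul_eq_mul, Derivation.map_one_eq_zero]
      have hC : (PowerSeries.C (R := ℚ)) 432 * (2:ℚ⟦X⟧) = (PowerSeries.C (R := ℚ)) 864 := by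
        rw [show (2:ℚ⟦X⟧) = PowerSeries.C 2 from (map_ofNat (PowerSeries.C (R := ℚ)) 2).symm, ← map_mul]
        norm_num
      linear_combination (psi * d⁄dX ℚ phi - phi * d⁄dX ℚ psi) * PowerSeries.X * hC
    rw [expand, phi_ODE, psi_ODE]
    ring
  have hc : PowerSeries.constantCoeff N = 0 := by
    rw [hN]
    have h1 : PowerSeries.constantCoeff phi = 1 := by
      have : PowerSeries.constantCoeff phi = b0coeff 0 := by simp [phi]
      rw [this, b0coeff_zero]
    have hps : PowerSeries.constantCoeff psi = 1 := by
      have := coeff_psi 0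
      simp only [PowerSeries.coeff_zero_eq_constantCoeff] at this
      rw [this, b0coeff_zero]; norm_num
    simp [h1, hps, pow_two]
  ext n
  rcases n with _|n
  · simpa [PowerSeries.coeff_zero_eq_constantCoeff] using hc
  · have h3 := congrArg (PowerSeries.coeff n) hdN
    rw [coeff_derivative, map_zero] at h3
    have hn : ((n:ℚ)+1) ≠ 0 := by positivity
    have h4 : PowerSeries.coeff (n+1) N = 0 := by
      rcases mul_eq_zero.mp h3 with h | h
      · exact h
      · exact absurd h (by exact_mod_cast hn)
    rw [h4, map_zero]

lemma rescale_deriv : PowerSeries.rescale (-1:ℚ) (d⁄dX ℚ phi) = - d⁄dX ℚ psi := by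
  rw [psi, deriv_rescale]; ext n; simp

lemma vv_eq : vv = phi + PowerSeries.C 144 * (PowerSeries.X * phi) + PowerSeries.C 864 * (PowerSeries.X^2 * d⁄dX ℚ phi) := by
  ext n
  rcases n with _|n
  · simp [vv, phi, pow_two, b1coeff_zero, b0coeff_zero, PowerSeries.coeff_C_mul]
  · rcases n with _|n
    · have h := b1_rel 0
      have e2 : (PowerSeries.coeff 1) (PowerSeries.X ^ 2 * d⁄dX ℚ phi) = 0 := by
        rw [PowerSeries.coeff_X_pow_mul']; norm_num
      simp only [map_add, PowerSeries.coeff_C_mul, e2, coeff_X1_mul]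
      simp [vv, phi]
      norm_num at h
      linarith
    · have h := b1_rel (n+1)
      rw [show (n+1+1 = n+2) from rfl]
      simp only [map_add, PowerSeries.coeff_C_mul, coeff_X2_mul, coeff_X1_mul]
      simp [vv, phi, coeff_derivative]
      push_cast at h ⊢
      linarith [h]

lemma key_series : phi * PowerSeries.rescale (-1) vv + psi * vv = 2 := by
  have hrvv : PowerSeries.rescale (-1:ℚ) vv
      = psi - PowerSeries.C 144 * (PowerSeries.X * psi) - PowerSeries.C 864 * (PowerSeries.X^2 * d⁄dX ℚ psi) := by
    rw [vv_eq]
    simp only [map_add, map_mul, map_pow, rescale_C', PowerSeries.rescale_neg_one_X,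
      rescale_deriv]
    rw [show (PowerSeries.rescale (-1:ℚ)) phi = psi from rfl]
    ring
  rw [hrvv, vv_eq]
  have hC : (2:ℚ⟦X⟧) * PowerSeries.C 432 = PowerSeries.C 864 := by
    rw [show (2:ℚ⟦X⟧) = PowerSeries.C 2 from (map_ofNat (PowerSeries.C (R := ℚ)) 2).symm, ← map_mul]
    norm_num
  linear_combination (2:ℚ⟦X⟧) * wronskian_eq
    - (PowerSeries.X^2 * (d⁄dX ℚ phi * psi - phi * d⁄dX ℚ psi)) * hC

lemma neg_one_pow_sub (n i : ℕ) (hi : i ≤ n) (hn : Even n) :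
    ((-1 : ℚ))^(n - i) = (-1)^i := by
  have h1 : ((-1:ℚ))^(n-i) * (-1)^i = 1 := by
    rw [← pow_add]
    rw [Nat.sub_add_cancel hi]
    exact hn.neg_one_pow
  have h2 : ((-1:ℚ))^i * (-1)^i = 1 := by
    rw [← pow_add]
    exact Even.neg_one_pow ⟨i, rfl⟩
  calc ((-1:ℚ))^(n-i) = (-1)^(n-i) * ((-1)^i * (-1)^i) := by rw [h2, mul_one]
    _ = ((-1)^(n-i) * (-1)^i) * (-1)^i := by ring
    _ = (-1)^i := by rw [h1, one_mul]

lemma key_identity (n : ℕ) (hn1 : 1 ≤ n) (hn : Even n) :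
    ∑ i ∈ Finset.range (n+1), (-1:ℚ)^i * b0coeff i * b1coeff (n-i) = 0 := by
  have h := congrArg (PowerSeries.coeff n) key_series
  rw [map_add, PowerSeries.coeff_mul, PowerSeries.coeff_mul] at h
  rw [show (2:ℚ⟦X⟧) = PowerSeries.C 2 from (map_ofNat (PowerSeries.C (R := ℚ)) 2).symm, PowerSeries.coeff_C] at h
  rw [if_neg (by omega)] at h
  rw [Finset.Nat.sum_antidiagonal_eq_sum_range_succ_mk,
    Finset.Nat.sum_antidiagonal_eq_sum_range_succ_mk] at h
  have e1 : ∀ i ∈ Finset.range (n+1),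
      PowerSeries.coeff i phi * PowerSeries.coeff (n-i) (PowerSeries.rescale (-1) vv)
        = (-1:ℚ)^i * b0coeff i * b1coeff (n-i) := by
    intro i hi
    rw [Finset.mem_range] at hi
    rw [PowerSeries.coeff_rescale]
    simp only [phi, vv, PowerSeries.coeff_mk]
    rw [neg_one_pow_sub n i (by omega) hn]
    ring
  have e2 : ∀ i ∈ Finset.range (n+1),
      PowerSeries.coeff i psi * PowerSeries.coeff (n-i) vv = (-1:ℚ)^i * b0coeff i * b1coeff (n-i) := by
    intro i hi
    rw [coeff_psi]
    simp only [vv, PowerSeries.coeff_mk]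
  have hA : ∑ k ∈ Finset.range (n+1), (PowerSeries.coeff (k, n-k).1) phi
      * (PowerSeries.coeff (k, n-k).2) ((PowerSeries.rescale (-1)) vv)
      = ∑ i ∈ Finset.range (n+1), (-1:ℚ)^i * b0coeff i * b1coeff (n-i) :=
    Finset.sum_congr rfl e1
  have hB : ∑ k ∈ Finset.range (n+1), (PowerSeries.coeff (k, n-k).1) psi * (PowerSeries.coeff (k, n-k).2) vv
      = ∑ i ∈ Finset.range (n+1), (-1:ℚ)^i * b0coeff i * b1coeff (n-i) :=
    Finset.sum_congr rfl e2
  rw [show n.succ = n + 1 from rfl, hA, hB] at h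
  linarith

end FZpart1

section
variable (A : Type) [CommRing A] [Algebra ℚ A] (z₁ z₂ : A)

/-- Coefficient function of the edge numerator. -/
noncomputable def Fc (i j : ℕ) : A :=
  (if i = 0 ∧ j = 0 then z₁ + z₂ else 0)
    - z₁^i * z₂^(j+1) * (algebraMap ℚ A (b0coeff i) * algebraMap ℚ A (b1coeff j))
    - z₁^(i+1) * z₂^j * (algebraMap ℚ A (b1coeff i) * algebraMap ℚ A (b0coeff j))


end

section Lemmas

variable {A : Type} [CommRing A] [Algebra ℚ A] {z₁ z₂ : A}

lemma finsupp_eq_zero_iff (e : Fin 2 →₀ ℕ) : e = 0 ↔ e 0 = 0 ∧ e 1 = 0 := by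
  constructor
  · intro h; simp [h]
  · rintro ⟨h0, h1⟩
    ext i
    fin_cases i
    · exact h0
    · exact h1

lemma single_add_single (e : Fin 2 →₀ ℕ) :
    Finsupp.single (0 : Fin 2) (e 0) + Finsupp.single (1 : Fin 2) (e 1) = e := by
  ext i
  fin_cases i <;>
    simp [Finsupp.single_apply, Fin.ext_iff]

/-- Product of a `Z`-supported and a `W`-supported series. -/
lemma mulZW (f g : MvPowerSeries (Fin 2) A)
    (hf : ∀ e : Fin 2 →₀ ℕ, e 1 ≠ 0 → coeff e f = 0)
    (hg : ∀ e : Fin 2 →₀ ℕ, e 0 ≠ 0 → coeff e g = 0) (e : Fin 2 →₀ ℕ) :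
    coeff e (f * g) = coeff (Finsupp.single 0 (e 0)) f
      * coeff (Finsupp.single 1 (e 1)) g := by
  classical
  rw [coeff_mul]
  rw [Finset.sum_eq_single (Finsupp.single (0:Fin 2) (e 0), Finsupp.single (1:Fin 2) (e 1))]
  · intro p hp hne
    rw [Finset.HasAntidiagonal.mem_antidiagonal] at hp
    by_cases hf1 : p.1 1 = 0
    · by_cases hg0 : p.2 0 = 0
      · exfalso
        apply hne
        have h0 : p.1 0 + p.2 0 = e 0 := by
          rw [← hp]; simp
        have h1 : p.1 1 + p.2 1 = e 1 := by
          rw [← hp]; simp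
        have hp1 : p.1 = Finsupp.single (0:Fin 2) (e 0) := by
          ext i
          fin_cases i
          · simp [Finsupp.single_apply]; omega
          · simp [Finsupp.single_apply, Fin.ext_iff]; omega
        have hp2 : p.2 = Finsupp.single (1:Fin 2) (e 1) := by
          ext i
          fin_cases i
          · simp [Finsupp.single_apply, Fin.ext_iff]; omega
          · simp [Finsupp.single_apply]; omega
        rw [Prod.ext_iff]
        exact ⟨hp1, hp2⟩
      · rw [hg _ hg0, mul_zero]
    · rw [hf _ hf1, zero_mul]
  · intro h
    exfalso
    apply h
    rw [Finset.HasAntidiagonal.mem_antidiagonal]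
    exact single_add_single e

lemma coeff_edge (e : Fin 2 →₀ ℕ) :
    coeff e (edgeNumerator A z₁ z₂) = Fc A z₁ z₂ (e 0) (e 1) := by
  classical
  rw [edgeNumerator, map_sub, map_sub]
  rw [mul_assoc (B0Z A z₁)]
  rw [mulZW (B0Z A z₁) _ ?hf1 ?hg1 e,
    mulZW (MvPowerSeries.C z₁ * B1Z A z₁) _ ?hf2 ?hg2 e]
  case hf1 =>
    intro e' h1
    rw [coeff_apply, B0Z, if_neg h1]
  case hg1 =>
    intro e' h0
    rw [coeff_C_mul, coeff_apply, B1W, if_neg h0, mul_zero]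
  case hf2 =>
    intro e' h1
    rw [coeff_C_mul, coeff_apply, B1Z, if_neg h1, mul_zero]
  case hg2 =>
    intro e' h0
    rw [coeff_apply, B0W, if_neg h0]
  rw [coeff_C_mul, coeff_C_mul, MvPowerSeries.coeff_C]
  rw [coeff_apply, coeff_apply, coeff_apply, coeff_apply]
  rw [B0Z, B1Z, B0W, B1W]
  simp only [Finsupp.single_eq_same, Finsupp.single_eq_of_ne (show (0:Fin 2) ≠ 1 by decide),
    Finsupp.single_eq_of_ne (show (1:Fin 2) ≠ 0 by decide), if_pos rfl, smul_eq_mul, if_true]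
  rw [Fc]
  by_cases h : e = 0
  · rw [if_pos h, if_pos ((finsupp_eq_zero_iff e).mp h)]
    ring
  · rw [if_neg h, if_neg (fun hc => h ((finsupp_eq_zero_iff e).mpr hc))]
    ring

end Lemmas

section Master

variable {A : Type} [CommRing A] [Algebra ℚ A] {z₁ z₂ : A}

lemma pow_even_sq {z : A} (hz : z^2 = 1) (k : ℕ) : z^(2*k) = 1 := by
  rw [pow_mul, hz, one_pow]

lemma pow_odd_sq {z : A} (hz : z^2 = 1) (k : ℕ) : z^(2*k+1) = z := by
  rw [pow_add, pow_even_sq hz, one_mul, pow_one]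

lemma zsum_mul_u (h₁ : z₁^2 = 1) (h₂ : z₂^2 = 1) (j : ℕ) :
    (z₁ + z₂) * (-(z₁*z₂))^j = (-1:A)^j * (z₁ + z₂) := by
  induction j with
  | zero => simp
  | succ j ih =>
    rw [pow_succ, ← mul_assoc, ih, pow_succ]
    have : (z₁ + z₂) * -(z₁*z₂) = -(z₁+z₂) := by
      linear_combination (-z₂) * h₁ + (-z₁) * h₂
    calc (-1:A)^j * (z₁+z₂) * -(z₁*z₂) = (-1)^j * ((z₁+z₂) * -(z₁*z₂)) := by ring
      _ = (-1)^j * -(z₁+z₂) := by rw [this]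
      _ = (-1)^j * (-1) * (z₁+z₂) := by ring

lemma master (h₁ : z₁^2 = 1) (h₂ : z₂^2 = 1) (n : ℕ) :
    ∑ j ∈ Finset.range (n+1), (-1:A)^j * Fc A z₁ z₂ j (n-j) = 0 := by
  rcases n with _ | m
  · rw [Finset.range_one, Finset.sum_singleton]
    norm_num [Fc, b0coeff_zero, b1coeff_zero]
  · set n := m + 1 with hn
    have hn1 : 1 ≤ n := by omega
    set u : A := -(z₁ * z₂) with hu
    have hu2 : u^2 = 1 := by
      rw [hu, neg_pow]
      simp only [mul_pow, h₁, h₂]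
      norm_num
    -- rewrite each term
    have step1 : ∀ j ∈ Finset.range (n+1), (-1:A)^j * Fc A z₁ z₂ j (n-j)
        = -(z₂^(n+1) * (u^j * (algebraMap ℚ A (b0coeff j)
              * algebraMap ℚ A (b1coeff (n-j)))))
          - z₁ * z₂^n * (u^j * (algebraMap ℚ A (b1coeff j)
              * algebraMap ℚ A (b0coeff (n-j)))) := by
      intro j hj
      rw [Finset.mem_range] at hj
      have hjn : j ≤ n := by omega
      have hif : ¬(j = 0 ∧ n - j = 0) := by omega
      rw [Fc, if_neg hif]
      have ha1 : z₁^j * z₂^((n-j)+1) = z₂^(n+1) * (z₁*z₂)^j := by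
        have e : n+1+j = ((n-j)+1) + 2*j := by omega
        calc z₁^j * z₂^((n-j)+1) = z₁^j * (z₂^((n-j)+1) * (z₂^2)^j) := by
              rw [h₂, one_pow, mul_one]
          _ = z₁^j * z₂^(n+1+j) := by rw [← pow_mul, ← pow_add, ← e]
          _ = z₂^(n+1) * (z₁*z₂)^j := by rw [mul_pow, pow_add]; ring
      have ha2 : z₁^(j+1) * z₂^(n-j) = z₁ * z₂^n * (z₁*z₂)^j := by
        have e : n+j = (n-j) + 2*j := by omega
        calc z₁^(j+1) * z₂^(n-j) = z₁^(j+1) * (z₂^(n-j) * (z₂^2)^j) := by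
              rw [h₂, one_pow, mul_one]
          _ = z₁^(j+1) * z₂^(n+j) := by rw [← pow_mul, ← pow_add, ← e]
          _ = z₁ * z₂^n * (z₁*z₂)^j := by rw [mul_pow, pow_add, pow_succ]; ring
      have hneg : (-1:A)^j * (z₁*z₂)^j = u^j := by
        rw [hu]
        exact (neg_pow (z₁*z₂) j).symm
      calc (-1:A)^j * ((0:A) - z₁^j * z₂^((n-j)+1) * (algebraMap ℚ A (b0coeff j)
              * algebraMap ℚ A (b1coeff (n-j)))
            - z₁^(j+1) * z₂^(n-j) * (algebraMap ℚ A (b1coeff j)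
              * algebraMap ℚ A (b0coeff (n-j))))
          = -((-1:A)^j * (z₁*z₂)^j) * z₂^(n+1) * (algebraMap ℚ A (b0coeff j)
              * algebraMap ℚ A (b1coeff (n-j)))
            - ((-1:A)^j * (z₁*z₂)^j) * (z₁ * z₂^n) * (algebraMap ℚ A (b1coeff j)
              * algebraMap ℚ A (b0coeff (n-j))) := by
            linear_combination (-(-1:A)^j * (algebraMap ℚ A (b0coeff j)
                * algebraMap ℚ A (b1coeff (n-j)))) * ha1
              + (-(-1:A)^j * (algebraMap ℚ A (b1coeff j)
                * algebraMap ℚ A (b0coeff (n-j)))) * ha2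
        _ = _ := by rw [hneg]; ring
    rw [Finset.sum_congr rfl step1, Finset.sum_sub_distrib, Finset.sum_neg_distrib,
      ← Finset.mul_sum, ← Finset.mul_sum]
    set Q : A := ∑ j ∈ Finset.range (n+1), u^j * (algebraMap ℚ A (b0coeff j)
      * algebraMap ℚ A (b1coeff (n-j))) with hQ
    have hrefl : ∑ j ∈ Finset.range (n+1), u^j * (algebraMap ℚ A (b1coeff j)
        * algebraMap ℚ A (b0coeff (n-j))) = u^n * Q := by
      rw [← Finset.sum_range_reflect]
      rw [hQ, Finset.mul_sum]
      refine Finset.sum_congr rfl ?_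
      intro j hj
      rw [Finset.mem_range] at hj
      have hjn : j ≤ n := by omega
      have e1 : n + 1 - 1 - j = n - j := by omega
      have e2 : n - (n - j) = j := by omega
      rw [e1, e2]
      have e3 : u^(n-j) = u^n * u^j := by
        calc u^(n-j) = u^(n-j) * (u^2)^j := by rw [hu2, one_pow, mul_one]
          _ = u^((n-j) + 2*j) := by rw [← pow_mul, ← pow_add]
          _ = u^(n+j) := by congr 1; omega
          _ = u^n * u^j := by rw [pow_add]
      rw [e3]
      ring
    rw [hrefl]
    rcases Nat.even_or_odd n with he | ho
    · obtain ⟨k, hk⟩ := he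
      have e1 : z₂^(n+1) = z₂ := by
        rw [show n+1 = 2*k+1 by omega]; exact pow_odd_sq h₂ k
      have e2 : z₂^n = 1 := by
        rw [show n = 2*k by omega]; exact pow_even_sq h₂ k
      have e3 : u^n = 1 := by
        rw [show n = 2*k by omega]; exact pow_even_sq hu2 k
      rw [e1, e2, e3, one_mul, mul_one]
      have hzQ : (z₁ + z₂) * Q = 0 := by
        rw [hQ, Finset.mul_sum]
        have hterm : ∀ j ∈ Finset.range (n+1), (z₁+z₂) * (u^j * (algebraMap ℚ A (b0coeff j)
            * algebraMap ℚ A (b1coeff (n-j))))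
            = (z₁+z₂) * algebraMap ℚ A ((-1:ℚ)^j * b0coeff j * b1coeff (n-j)) := by
          intro j hj
          have hz := zsum_mul_u h₁ h₂ j
          rw [hu] at *
          have hmap : algebraMap ℚ A ((-1:ℚ)^j * b0coeff j * b1coeff (n-j))
              = (-1:A)^j * (algebraMap ℚ A (b0coeff j) * algebraMap ℚ A (b1coeff (n-j))) := by
            rw [map_mul, map_mul, map_pow, map_neg, map_one]
            ring
          rw [hmap]
          linear_combination (algebraMap ℚ A (b0coeff j) * algebraMap ℚ A (b1coeff (n-j))) * hz
        rw [Finset.sum_congr rfl hterm, ← Finset.mul_sum, ← map_sum]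
        have hkey := key_identity n hn1 ⟨k, hk⟩
        rw [hkey, map_zero, mul_zero]
      linear_combination (-1 : A) * hzQ
    · obtain ⟨k, hk⟩ := ho
      have e1 : z₂^(n+1) = 1 := by
        rw [show n+1 = 2*(k+1) by omega]; exact pow_even_sq h₂ (k+1)
      have e2 : z₂^n = z₂ := by
        rw [show n = 2*k+1 by omega]; exact pow_odd_sq h₂ k
      have e3 : u^n = u := by
        rw [show n = 2*k+1 by omega]; exact pow_odd_sq hu2 k
      rw [e1, e2, e3, one_mul]
      rw [hu]
      linear_combination (z₂^2 * Q) * h₁ + Q * h₂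

end Master

section Quotient

variable {A : Type} [CommRing A] [Algebra ℚ A] {z₁ z₂ : A}

/-- Coefficients of the quotient series. -/
noncomputable def Qc (z₁ z₂ : A) (a b : ℕ) : A :=
  ∑ k ∈ Finset.range (b+1), (-1:A)^k * Fc A z₁ z₂ (a+1+k) (b-k)

lemma quot_rec (h₁ : z₁^2 = 1) (h₂ : z₂^2 = 1) (a b : ℕ) :
    (if 1 ≤ a then Qc z₁ z₂ (a-1) b else 0) + (if 1 ≤ b then Qc z₁ z₂ a (b-1) else 0)
      = Fc A z₁ z₂ a b := by
  rcases a with _ | a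
  · rcases b with _ | b
    · simp only [if_neg (by omega : ¬ (1:ℕ) ≤ 0), add_zero]
      have h := master h₁ h₂ 0
      rw [Finset.range_one, Finset.sum_singleton] at h
      simpa using h.symm
    · simp only [if_neg (by omega : ¬ (1:ℕ) ≤ 0), if_pos (by omega : 1 ≤ b+1), zero_add,
        Nat.add_sub_cancel]
      have h := master h₁ h₂ (b+1)
      rw [Finset.sum_range_succ'] at h
      simp only [pow_zero, one_mul, Nat.sub_zero] at h
      have hterm : ∀ k ∈ Finset.range (b+1), (-1:A)^(k+1) * Fc A z₁ z₂ (k+1) (b+1-(k+1))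
          = -((-1:A)^k * Fc A z₁ z₂ (0+1+k) (b-k)) := by
        intro k hk
        have e1 : b+1-(k+1) = b-k := by omega
        have e2 : 0+1+k = k+1 := by omega
        rw [e1, e2, pow_succ]
        ring
      rw [Finset.sum_congr rfl hterm, Finset.sum_neg_distrib] at h
      rw [Qc]
      linear_combination (-1:A) * h
  · rcases b with _ | b
    · simp only [if_pos (by omega : 1 ≤ a+1), if_neg (by omega : ¬ (1:ℕ) ≤ 0), add_zero,
        Nat.add_sub_cancel]
      rw [Qc, Finset.range_one, Finset.sum_singleton]
      simp
    · simp only [if_pos (by omega : 1 ≤ a+1), if_pos (by omega : 1 ≤ b+1),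
        Nat.add_sub_cancel]
      rw [Qc, Qc, Finset.sum_range_succ']
      have hterm : ∀ k ∈ Finset.range (b+1), (-1:A)^(k+1) * Fc A z₁ z₂ (a+1+(k+1)) (b+1-(k+1))
          = -((-1:A)^k * Fc A z₁ z₂ (a+1+1+k) (b-k)) := by
        intro k hk
        have e1 : b+1-(k+1) = b-k := by omega
        have e2 : a+1+(k+1) = a+1+1+k := by omega
        rw [e1, e2, pow_succ]
        ring
      rw [Finset.sum_congr rfl hterm, Finset.sum_neg_distrib]
      simp only [pow_zero, one_mul, Nat.sub_zero, Nat.add_sub_cancel]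
      ring

end Quotient

theorem edgeNumerator_dvd (A : Type) [CommRing A] [Algebra ℚ A] (z₁ z₂ : A)
    (h₁ : z₁ ^ 2 = 1) (h₂ : z₂ ^ 2 = 1) :
    (MvPowerSeries.X (0 : Fin 2) + MvPowerSeries.X (1 : Fin 2)) ∣ edgeNumerator A z₁ z₂ := by
  classical
  obtain ⟨Q, hQ⟩ : ∃ Q : MvPowerSeries (Fin 2) A, Q = fun e => Qc z₁ z₂ (e 0) (e 1) := ⟨_, rfl⟩
  refine ⟨Q, MvPowerSeries.ext ?_⟩
  intro e
  rw [coeff_edge, add_mul, map_add, MvPowerSeries.X_def, MvPowerSeries.X_def,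
    coeff_monomial_mul, coeff_monomial_mul]
  simp only [one_mul, coeff_apply, Finsupp.tsub_apply,
    Finsupp.single_eq_same, Finsupp.single_eq_of_ne (show (0:Fin 2) ≠ 1 by decide),
    Finsupp.single_eq_of_ne (show (1:Fin 2) ≠ 0 by decide), Nat.sub_zero]
  simp only [Finsupp.single_le_iff, hQ, Finsupp.tsub_apply,
    Finsupp.single_eq_same, Finsupp.single_eq_of_ne (show (0:Fin 2) ≠ 1 by decide),
    Finsupp.single_eq_of_ne (show (1:Fin 2) ≠ 0 by decide), Nat.sub_zero]
  exact (quot_rec h₁ h₂ (e 0) (e 1)).symm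
end
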